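/- Let p be a prime and R a commutative ring in which (p-1)! is invertible, let I ⊆ R be an ideal and k ≥ 1 an integer. Then for every x ∈ I^k, the element log_p(exp_p(x)) - x lies in I^{pk}, and the element exp_p(log_p(1 + x)) - (1 + x) lies in I^{pk}. -/

import Mathlib

/-- The `p`-truncated exponential `exp_p(x) = ∑_{j=0}^{p-1} x^j / j!`. -/
noncomputable def truncExp (p : ℕ) {R : Type*} [CommRing R] (x : R) : R :=
  ∑ j ∈ Finset.range p, Ring.inverse ((Nat.factorial j : R)) * x ^ j

/-- The `p`-truncated logarithm `log_p(r) = ∑_{m=1}^{p-1} (-1)^{m-1} (r-1)^m / m`. -/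
noncomputable def truncLog (p : ℕ) {R : Type*} [CommRing R] (r : R) : R :=
  ∑ m ∈ Finset.range (p - 1), (-1) ^ m * Ring.inverse (((m + 1 : ℕ) : R)) * (r - 1) ^ (m + 1)

open Polynomial Finset

section helpers
variable {R : Type*} [CommRing R]

lemma myInvCongr {a b : R} (h : a * b = 1) : Ring.inverse a = b := by
  have ha : IsUnit a := IsUnit.of_mul_eq_one b h
  calc Ring.inverse a = Ring.inverse a * (a * b) := by rw [h, mul_one]
    _ = Ring.inverse a * a * b := by ring
    _ = b := by rw [Ring.inverse_mul_cancel a ha, one_mul]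

lemma myMapInv {T : Type*} [CommRing T] (f : R →+* T) {a : R} (ha : IsUnit a) :
    f (Ring.inverse a) = Ring.inverse (f a) := by
  symm; apply myInvCongr
  rw [← map_mul, Ring.mul_inverse_cancel a ha, map_one]

lemma map_truncExp {T : Type*} [CommRing T] (p : ℕ) (f : R →+* T)
    (hu : ∀ j < p, IsUnit ((Nat.factorial j : R))) (a : R) :
    f (truncExp p a) = truncExp p (f a) := by
  unfold truncExp
  rw [map_sum]
  refine Finset.sum_congr rfl fun j hj => ?_
  rw [map_mul, map_pow, myMapInv f (hu j (Finset.mem_range.mp hj)), map_natCast]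

lemma map_truncLog {T : Type*} [CommRing T] (p : ℕ) (f : R →+* T)
    (hu : ∀ m < p - 1, IsUnit (((m + 1 : ℕ) : R))) (a : R) :
    f (truncLog p a) = truncLog p (f a) := by
  unfold truncLog
  rw [map_sum]
  refine Finset.sum_congr rfl fun m hm => ?_
  rw [map_mul, map_mul, map_pow, map_pow, map_neg, map_one, map_sub, map_one,
    myMapInv f (hu m (Finset.mem_range.mp hm)), map_natCast]

lemma truncExp_zero (p : ℕ) (hp : 0 < p) : truncExp p (0 : R) = 1 := by
  unfold truncExp
  rw [Finset.sum_eq_single 0]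
  · simp [Nat.factorial]
  · intro j hj hj0
    simp [zero_pow hj0]
  · intro h; exact absurd (Finset.mem_range.mpr hp) h

lemma truncLog_one (p : ℕ) : truncLog p (1 : R) = 0 := by
  unfold truncLog; simp

lemma my_geom (u : R) (n : ℕ) :
    (∑ m ∈ Finset.range n, (-1) ^ m * u ^ m) * (1 + u) = 1 - (-u) ^ n := by
  have hs : (∑ m ∈ Finset.range n, (-1 : R) ^ m * u ^ m) = ∑ m ∈ Finset.range n, (-u) ^ m :=
    Finset.sum_congr rfl fun m _ => (neg_pow u m).symm
  rw [hs]
  linear_combination (-1 : R) * geom_sum_mul (-u) n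

lemma inv_fac_succ {j : ℕ} (h2 : IsUnit ((Nat.factorial (j + 1) : R))) :
    Ring.inverse ((Nat.factorial (j + 1) : R)) * ((j + 1 : ℕ) : R)
      = Ring.inverse ((Nat.factorial j : R)) := by
  symm
  apply myInvCongr
  have hfs : ((Nat.factorial (j + 1) : ℕ) : R) = ((j + 1 : ℕ) : R) * (Nat.factorial j : R) := by
    rw [Nat.factorial_succ]; push_cast; ring
  calc (Nat.factorial j : R) * (Ring.inverse ((Nat.factorial (j + 1) : R)) * ((j + 1 : ℕ) : R))
      = Ring.inverse ((Nat.factorial (j + 1) : R)) * (((j + 1 : ℕ) : R) * (Nat.factorial j : R)) := by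
        ring
    _ = 1 := by rw [← hfs, Ring.inverse_mul_cancel _ h2]

variable {p : ℕ}

lemma truncExpC (hu : ∀ j < p, IsUnit ((Nat.factorial j : R))) (q : R[X]) :
    truncExp p q = ∑ j ∈ Finset.range p, C (Ring.inverse ((Nat.factorial j : R))) * q ^ j := by
  unfold truncExp
  refine Finset.sum_congr rfl fun j hj => ?_
  rw [myMapInv (C : R →+* R[X]) (hu j (Finset.mem_range.mp hj)), map_natCast]

lemma truncLogC (hn : ∀ m < p - 1, IsUnit (((m + 1 : ℕ) : R))) (q : R[X]) :
    truncLog p q = ∑ m ∈ Finset.range (p - 1),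
      (-1) ^ m * C (Ring.inverse (((m + 1 : ℕ) : R))) * (q - 1) ^ (m + 1) := by
  unfold truncLog
  refine Finset.sum_congr rfl fun m hm => ?_
  rw [myMapInv (C : R →+* R[X]) (hn m (Finset.mem_range.mp hm)), map_natCast]

lemma deriv_truncExp (hp : 0 < p) (hu : ∀ j < p, IsUnit ((Nat.factorial j : R))) (q : R[X]) :
    derivative (truncExp p q) =
      (truncExp p q - C (Ring.inverse ((Nat.factorial (p - 1) : R))) * q ^ (p - 1))
        * derivative q := by
  obtain ⟨n, rfl⟩ : ∃ n, p = n + 1 := ⟨p - 1, (Nat.succ_pred_eq_of_pos hp).symm⟩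
  rw [truncExpC hu, derivative_sum]
  simp only [derivative_C_mul, derivative_pow, Nat.add_sub_cancel]
  rw [Finset.sum_range_succ' (fun j => C (Ring.inverse ((Nat.factorial j : R)))
      * (C ((j : ℕ) : R) * q ^ (j - 1) * derivative q))]
  rw [Finset.sum_range_succ (fun j => C (Ring.inverse ((Nat.factorial j : R))) * q ^ j)]
  rw [add_sub_cancel_right, Finset.sum_mul]
  simp only [Nat.cast_zero, map_zero, zero_mul, mul_zero, add_zero, Nat.add_sub_cancel]
  refine Finset.sum_congr rfl fun j hj => ?_
  rw [← mul_assoc, ← mul_assoc, ← C_mul,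
    inv_fac_succ (hu (j + 1) (by have := Finset.mem_range.mp hj; omega))]

lemma deriv_truncLog (hn : ∀ m < p - 1, IsUnit (((m + 1 : ℕ) : R))) (q : R[X]) :
    derivative (truncLog p q) =
      (∑ m ∈ Finset.range (p - 1), (-1) ^ m * (q - 1) ^ m) * derivative q := by
  rw [truncLogC hn, derivative_sum, Finset.sum_mul]
  refine Finset.sum_congr rfl fun m hm => ?_
  have h1 : derivative ((-1 : R[X]) ^ m) = 0 := by
    rw [derivative_pow]; simp
  rw [derivative_mul, derivative_mul, h1, derivative_C, derivative_pow, derivative_sub,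
    derivative_one, sub_zero, Nat.add_sub_cancel]
  have h2 : C (Ring.inverse (((m + 1 : ℕ) : R))) * C (((m + 1 : ℕ) : R)) = 1 := by
    rw [← C_mul, Ring.inverse_mul_cancel _ (hn m (Finset.mem_range.mp hm)), C_1]
  calc (0 * C (Ring.inverse (((m + 1:ℕ)) : R)) + (-1)^m * 0) * (q-1)^(m+1)
        + (-1)^m * C (Ring.inverse (((m + 1:ℕ)) : R))
          * (C (((m + 1 : ℕ)) : R) * (q-1)^m * derivative q)
      = (C (Ring.inverse (((m + 1:ℕ)) : R)) * C (((m + 1 : ℕ)) : R))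
          * ((-1)^m * (q-1)^m * derivative q) := by ring
    _ = (-1)^m * (q-1)^m * derivative q := by rw [h2, one_mul]

lemma coeff_zero_of (hn : ∀ m, 1 ≤ m → m ≤ p - 1 → IsUnit ((m : R)))
    (F S H : R[X]) (h0 : F.coeff 0 = 0)
    (hd : derivative F = F * S + X ^ (p - 1) * H) :
    ∀ n < p, F.coeff n = 0 := by
  intro n
  induction n using Nat.strong_induction_on with
  | _ n ih =>
    intro hnp
    match n, hnp, ih with
    | 0, _, _ => exact h0
    | (m + 1), hnp, ih =>
      have hm : m < p - 1 := by omega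
      have h1 : coeff (derivative F) m = coeff (F * S) m := by
        rw [hd, coeff_add, mul_comm (X ^ (p - 1)) H, coeff_mul_X_pow', if_neg (by omega), add_zero]
      have h2 : coeff (F * S) m = 0 := by
        rw [coeff_mul]
        refine Finset.sum_eq_zero fun ij hij => ?_
        have hij' := Finset.HasAntidiagonal.mem_antidiagonal.mp hij
        rw [ih ij.1 (by omega) (by omega), zero_mul]
      have h3 : F.coeff (m + 1) * ((m : R) + 1) = 0 := by
        rw [← coeff_derivative, h1, h2]
      have hu : IsUnit ((m : R) + 1) := by
        have := hn (m + 1) (by omega) (by omega)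
        rwa [Nat.cast_add, Nat.cast_one] at this
      exact hu.mul_left_eq_zero.mp h3

end helpers


/-- for `x ∈ I^k`, `log_p(exp_p(x)) - x ∈ I^{pk}` and
`exp_p(log_p(1 + x)) - (1 + x) ∈ I^{pk}`. -/
theorem truncLog_truncExp_sub_mem (p : ℕ) (hp : p.Prime) (R : Type*) [CommRing R]
    (hfac : IsUnit ((Nat.factorial (p - 1) : R))) (I : Ideal R) (k : ℕ) (hk : 1 ≤ k) :
    ∀ x ∈ I ^ k,
      truncLog p (truncExp p x) - x ∈ I ^ (p * k) ∧
      truncExp p (truncLog p (1 + x)) - (1 + x) ∈ I ^ (p * k) := by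
  intro x hx
  have hp0 : 0 < p := hp.pos
  have hu : ∀ j < p, IsUnit ((Nat.factorial j : R)) := fun j hj =>
    isUnit_of_dvd_unit (Nat.cast_dvd_cast (Nat.factorial_dvd_factorial (by omega))) hfac
  have hn : ∀ m, 1 ≤ m → m ≤ p - 1 → IsUnit ((m : R)) := fun m h1 h2 =>
    isUnit_of_dvd_unit (Nat.cast_dvd_cast (Nat.dvd_factorial h1 h2)) hfac
  have hn' : ∀ m < p - 1, IsUnit (((m + 1 : ℕ) : R)) := fun m hm => hn (m + 1) (by omega) (by omega)
  have huX : ∀ j < p, IsUnit ((Nat.factorial j : R[X])) := fun j hj => by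
    have := (hu j hj).map (C : R →+* R[X]); rwa [map_natCast] at this
  have hnX' : ∀ m < p - 1, IsUnit (((m + 1 : ℕ) : R[X])) := fun m hm => by
    have := (hn' m hm).map (C : R →+* R[X]); rwa [map_natCast] at this
  have hmem : ∀ g : R[X], x ^ p * Polynomial.eval x g ∈ I ^ (p * k) := by
    intro g
    refine Ideal.mul_mem_right _ _ ?_
    have h := Ideal.pow_mem_pow hx p
    rwa [← pow_mul, mul_comm k p] at h
  constructor
  · -- part 1 : log(exp x) - x
    set E : R[X] := truncExp p (X : R[X]) with hE
    set S : R[X] := ∑ m ∈ Finset.range (p - 1), (-1) ^ m * (E - 1) ^ m with hS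
    have hE0 : Polynomial.eval 0 E = 1 := by
      rw [hE, ← coe_evalRingHom, map_truncExp p (evalRingHom 0) huX, coe_evalRingHom, eval_X,
        truncExp_zero p hp0]
    obtain ⟨v, hv⟩ : X ∣ E - 1 := by
      rw [X_dvd_iff, coeff_zero_eq_eval_zero, eval_sub, eval_one, hE0, sub_self]
    have d2 : derivative E = E - C (Ring.inverse ((Nat.factorial (p - 1) : R))) * X ^ (p - 1) := by
      have h := deriv_truncExp hp0 hu (X : R[X])
      rwa [derivative_X, mul_one] at h
    have d1 : derivative (truncLog p E) = S * derivative E := deriv_truncLog hn' E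
    have g : S * (1 + (E - 1)) = 1 - (-(E - 1)) ^ (p - 1) := my_geom (E - 1) (p - 1)
    rw [hv, show -(X * v) = X * -v by ring, mul_pow] at g
    set c : R[X] := C (Ring.inverse ((Nat.factorial (p - 1) : R))) with hc
    set F1 : R[X] := truncLog p E - X with hF1
    have hd : derivative F1 = F1 * 0 + X ^ (p - 1) * (-((-v) ^ (p - 1)) - c * S) := by
      rw [hF1, derivative_sub, derivative_X, d1, d2]
      linear_combination g + S * hv
    have h0 : F1.coeff 0 = 0 := by
      rw [hF1, coeff_sub, coeff_zero_eq_eval_zero, coeff_zero_eq_eval_zero, eval_X, sub_zero,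
        ← coe_evalRingHom, map_truncLog p (evalRingHom 0) hnX', coe_evalRingHom, hE0,
        truncLog_one]
    obtain ⟨G, hG⟩ : X ^ p ∣ F1 :=
      X_pow_dvd_iff.mpr (coeff_zero_of hn F1 0 _ h0 hd)
    have e1 : Polynomial.eval x (truncLog p E) = truncLog p (truncExp p x) := by
      rw [← coe_evalRingHom, map_truncLog p (evalRingHom x) hnX', coe_evalRingHom, hE,
        ← coe_evalRingHom, map_truncExp p (evalRingHom x) huX, coe_evalRingHom, eval_X]
    have heval := congrArg (Polynomial.eval x) hG
    rw [hF1] at heval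
    rw [eval_sub, eval_X, eval_mul, eval_pow, eval_X, e1] at heval
    rw [heval]
    exact hmem G
  · -- part 2 : exp(log(1+x)) - (1+x)
    set L : R[X] := truncLog p (1 + X) with hL
    set S : R[X] := ∑ m ∈ Finset.range (p - 1), (-1) ^ m * (X : R[X]) ^ m with hS
    have hL0 : Polynomial.eval 0 L = 0 := by
      rw [hL, ← coe_evalRingHom, map_truncLog p (evalRingHom 0) hnX', coe_evalRingHom,
        eval_add, eval_one, eval_X, add_zero, truncLog_one]
    obtain ⟨w, hw⟩ : X ∣ L := by
      rw [X_dvd_iff, coeff_zero_eq_eval_zero, hL0]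
    have dL : derivative L = S := by
      have h := deriv_truncLog hn' ((1 : R[X]) + X)
      rw [derivative_add, derivative_one, derivative_X, zero_add, mul_one] at h
      rw [hL, h, hS]
      exact Finset.sum_congr rfl fun m _ => by rw [show (1 : R[X]) + X - 1 = X by ring]
    have dE : derivative (truncExp p L) =
        (truncExp p L - C (Ring.inverse ((Nat.factorial (p - 1) : R))) * L ^ (p - 1)) * S := by
      rw [deriv_truncExp hp0 hu L, dL]
    have g : S * (1 + X) = 1 - (-X : R[X]) ^ (p - 1) := my_geom (X : R[X]) (p - 1)
    have hXpow : (-X : R[X]) ^ (p - 1) = X ^ (p - 1) * (-1 : R[X]) ^ (p - 1) := by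
      rw [show (-X : R[X]) = X * -1 by ring, mul_pow]
    have hLpow : L ^ (p - 1) = X ^ (p - 1) * w ^ (p - 1) := by rw [hw, mul_pow]
    set c : R[X] := C (Ring.inverse ((Nat.factorial (p - 1) : R))) with hc
    set F2 : R[X] := truncExp p L - (1 + X) with hF2
    have hd : derivative F2 = F2 * S
        + X ^ (p - 1) * (-((-1 : R[X]) ^ (p - 1)) - c * w ^ (p - 1) * S) := by
      rw [hF2, derivative_sub, derivative_add, derivative_one, derivative_X, zero_add, dE]
      linear_combination (-S) * hF2 + g - hXpow - (c * S) * hLpow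
    have h0 : F2.coeff 0 = 0 := by
      rw [hF2, coeff_sub, coeff_zero_eq_eval_zero, coeff_zero_eq_eval_zero, eval_add, eval_one,
        eval_X, add_zero, ← coe_evalRingHom, map_truncExp p (evalRingHom 0) huX,
        coe_evalRingHom, hL0, truncExp_zero p hp0, sub_self]
    obtain ⟨G, hG⟩ : X ^ p ∣ F2 :=
      X_pow_dvd_iff.mpr (coeff_zero_of hn F2 S _ h0 hd)
    have e1 : Polynomial.eval x (truncExp p L) = truncExp p (truncLog p (1 + x)) := by
      rw [← coe_evalRingHom, map_truncExp p (evalRingHom x) huX, coe_evalRingHom, hL,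
        ← coe_evalRingHom, map_truncLog p (evalRingHom x) hnX', coe_evalRingHom,
        eval_add, eval_one, eval_X]
    have heval := congrArg (Polynomial.eval x) hG
    rw [hF2] at heval
    rw [eval_sub, eval_add, eval_one, eval_X, eval_mul, eval_pow, eval_X, e1] at heval
    rw [heval]
    exact hmem G
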